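/- For programs P, Q and a set of atoms A, P ≡ˢ_A Q (strong equivalence relative to A) holds if and only if SE^A(P) = SE^A(Q), where SE^A denotes the set of relativized A-SE-models. -/

import Mathlib

structure Rule where
  head : Finset ℕ
  pos : Finset ℕ
  neg : Finset ℕ

abbrev Interp := Set ℕ
abbrev Program := Set Rule

/-- Classical satisfaction of a rule by an interpretation. -/
def Rule.satisfied (I : Interp) (r : Rule) : Prop :=
  ((↑r.pos ⊆ I) ∧ ∀ a ∈ r.neg, a ∉ I) → ∃ a ∈ r.head, a ∈ I

/-- `I` is a classical model of the program `P`. -/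
def Models (I : Interp) (P : Program) : Prop := ∀ r ∈ P, Rule.satisfied I r

/-- `X` models the Gelfond-Lifschitz reduct `P^Y`. -/
def ModelsReduct (X : Interp) (P : Program) (Y : Interp) : Prop :=
  ∀ r ∈ P, (∀ a ∈ r.neg, a ∉ Y) → (↑r.pos ⊆ X) → ∃ a ∈ r.head, a ∈ X

/-- `Y` is an answer set of `P`: a minimal model of the reduct `P^Y`. -/
def AnswerSet (P : Program) (Y : Interp) : Prop :=
  ModelsReduct Y P Y ∧ ∀ Z : Interp, Z ⊂ Y → ¬ ModelsReduct Z P Y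

/-- `(X,Y)` is an SE-model of `P`. -/
def SEModel (P : Program) (X Y : Interp) : Prop :=
  X ⊆ Y ∧ Models Y P ∧ ModelsReduct X P Y

/-- `(X,Y)` is a UE-model of `P`. -/
def UEModel (P : Program) (X Y : Interp) : Prop :=
  SEModel P X Y ∧ ∀ X', SEModel P X' Y → X ⊂ X' → X' = Y

/-- The program consisting of the atoms in `F` as facts. -/
def Facts (F : Set ℕ) : Program := { r | ∃ a ∈ F, r = ⟨{a}, ∅, ∅⟩ }

/-- Uniform equivalence of programs. -/
def UnifEquiv (P Q : Program) : Prop :=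
  ∀ F : Set ℕ, ∀ Y : Interp, AnswerSet (P ∪ Facts F) Y ↔ AnswerSet (Q ∪ Facts F) Y

/-- Strong equivalence of programs. -/
def StrongEquiv (P Q : Program) : Prop :=
  ∀ R : Program, ∀ Y : Interp, AnswerSet (P ∪ R) Y ↔ AnswerSet (Q ∪ R) Y

def Rule.atoms (r : Rule) : Finset ℕ := r.head ∪ r.pos ∪ r.neg

/-- All atoms occurring in `R` belong to `A`. -/
def ProgramOver (A : Set ℕ) (R : Program) : Prop := ∀ r ∈ R, ↑r.atoms ⊆ A

/-- Strong equivalence relative to a set of atoms `A`. -/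
def RelStrongEquiv (A : Set ℕ) (P Q : Program) : Prop :=
  ∀ R : Program, ProgramOver A R →
    ∀ Y : Interp, AnswerSet (P ∪ R) Y ↔ AnswerSet (Q ∪ R) Y

/-- Uniform equivalence relative to a set of atoms `A`. -/
def RelUnifEquiv (A : Set ℕ) (P Q : Program) : Prop :=
  ∀ F : Set ℕ, F ⊆ A →
    ∀ Y : Interp, AnswerSet (P ∪ Facts F) Y ↔ AnswerSet (Q ∪ Facts F) Y

/-- A unary rule: one head atom, no negation, at most one positive body atom. -/
def Unary (r : Rule) : Prop := r.head.card = 1 ∧ r.neg = ∅ ∧ r.pos.card ≤ 1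

/-- `(X,Y)` is a (relativized) `A`-SE-model of `P`. -/
def ASEModel (A : Set ℕ) (P : Program) (X Y : Interp) : Prop :=
  (X = Y ∨ X ⊂ Y ∩ A) ∧ Models Y P ∧
  (∀ Y' : Interp, Y' ⊂ Y → Y' ∩ A = Y ∩ A → ¬ ModelsReduct Y' P Y) ∧
  (X ⊂ Y → ∃ X' : Interp, X' ⊆ Y ∧ X' ∩ A = X ∧ ModelsReduct X' P Y)

/-- `(X,Y)` is a (relativized) `A`-UE-model of `P`. -/
def AUEModel (A : Set ℕ) (P : Program) (X Y : Interp) : Prop :=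
  ASEModel A P X Y ∧ ∀ X', ASEModel A P X' Y → X ⊂ X' → X' = Y

/-- A positive program: all rules have empty negative body. -/
def Positive (P : Program) : Prop := ∀ r ∈ P, r.neg = ∅

/-- Positive dependency: edge from a positive body atom to a head atom. -/
def Dep (P : Program) (a b : ℕ) : Prop := ∃ r ∈ P, a ∈ r.pos ∧ b ∈ r.head

/-- Head-cycle freeness: no directed cycle of the positive dependency graph
through two distinct head atoms of one rule. -/
def HCF (P : Program) : Prop :=
  ∀ r ∈ P, ∀ a ∈ r.head, ∀ b ∈ r.head, a ≠ b →
    ¬ (Relation.ReflTransGen (Dep P) a b ∧ Relation.ReflTransGen (Dep P) b a)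

/-- The shift of a single rule. -/
def Rule.shift (r : Rule) : Program :=
  if r.head = ∅ then {r}
  else { r' | ∃ a ∈ r.head, r' = ⟨{a}, r.pos, r.neg ∪ (r.head.erase a)⟩ }

/-- The shift of a program. -/
def shiftProg (P : Program) : Program := ⋃ r ∈ P, r.shift

/-- The set of SE-models of `P` as a set of pairs. -/
def SEset (P : Program) : Set (Interp × Interp) := { p | SEModel P p.1 p.2 }

lemma modelsReduct_union {Z : Interp} {P R : Program} {Y : Interp} :
    ModelsReduct Z (P ∪ R) Y ↔ ModelsReduct Z P Y ∧ ModelsReduct Z R Y := by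
  constructor
  · intro h
    exact ⟨fun r hr => h r (Or.inl hr), fun r hr => h r (Or.inr hr)⟩
  · rintro ⟨h1, h2⟩ r (hr | hr)
    · exact h1 r hr
    · exact h2 r hr

lemma models_iff_reduct {Y : Interp} {P : Program} :
    Models Y P ↔ ModelsReduct Y P Y := by
  unfold Models ModelsReduct Rule.satisfied
  constructor
  · intro h r hr hneg hpos
    exact h r hr ⟨hpos, hneg⟩
  · rintro h r hr ⟨hpos, hneg⟩
    exact h r hr hneg hpos

lemma reduct_invariant {A : Set ℕ} {R : Program} (hR : ProgramOver A R)
    {Z1 Z2 Y : Interp} (hZ : Z1 ∩ A = Z2 ∩ A)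
    (h : ModelsReduct Z1 R Y) : ModelsReduct Z2 R Y := by
  intro r hr hneg hpos
  have hat := hR r hr
  have hposA : ∀ a ∈ r.pos, a ∈ A := by
    intro a ha
    exact hat (by simp [Rule.atoms, Finset.mem_union, ha])
  have hheadA : ∀ a ∈ r.head, a ∈ A := by
    intro a ha
    exact hat (by simp [Rule.atoms, Finset.mem_union, ha])
  have hpos1 : ↑r.pos ⊆ Z1 := by
    intro a ha
    have ha' : a ∈ r.pos := ha
    have : a ∈ Z2 ∩ A := ⟨hpos ha, hposA a ha'⟩
    rw [← hZ] at this
    exact this.1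
  obtain ⟨a, hah, haz⟩ := h r hr hneg hpos1
  have : a ∈ Z2 ∩ A := by
    rw [← hZ]
    exact ⟨haz, hheadA a hah⟩
  exact ⟨a, hah, this.1⟩

lemma facts_reduct {F : Set ℕ} {Z Y : Interp} :
    ModelsReduct Z (Facts F) Y ↔ F ⊆ Z := by
  constructor
  · intro h a ha
    obtain ⟨b, hb, hbz⟩ := h ⟨{a}, ∅, ∅⟩ ⟨a, ha, rfl⟩ (by simp) (by simp)
    simp at hb
    subst hb
    exact hbz
  · rintro h r ⟨a, ha, rfl⟩ _ _
    exact ⟨a, by simp, h ha⟩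

lemma facts_over {A F : Set ℕ} (h : F ⊆ A) : ProgramOver A (Facts F) := by
  rintro r ⟨a, ha, rfl⟩ x hx
  simp [Rule.atoms] at hx
  subst hx
  exact h ha

lemma aseYY {A : Set ℕ} {P : Program} {Y : Interp} :
    ASEModel A P Y Y ↔ Models Y P ∧
      ∀ Y' : Interp, Y' ⊂ Y → Y' ∩ A = Y ∩ A → ¬ ModelsReduct Y' P Y := by
  constructor
  · rintro ⟨_, h2, h3, _⟩
    exact ⟨h2, h3⟩
  · rintro ⟨h2, h3⟩
    exact ⟨Or.inl rfl, h2, h3, fun h => absurd rfl h.ne⟩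

lemma factsAS {A : Set ℕ} {P : Program} {Y : Interp} :
    AnswerSet (P ∪ Facts (Y ∩ A)) Y ↔ ASEModel A P Y Y := by
  rw [aseYY]
  constructor
  · rintro ⟨hm, hmin⟩
    have hm' := modelsReduct_union.mp hm
    refine ⟨models_iff_reduct.mpr hm'.1, ?_⟩
    intro Y' hY' hYA hY'P
    apply hmin Y' hY'
    refine modelsReduct_union.mpr ⟨hY'P, facts_reduct.mpr ?_⟩
    rw [← hYA]
    exact Set.inter_subset_left
  · rintro ⟨h2, h3⟩
    refine ⟨modelsReduct_union.mpr ⟨models_iff_reduct.mp h2,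
      facts_reduct.mpr Set.inter_subset_left⟩, ?_⟩
    intro Z hZ hZm
    have hZm' := modelsReduct_union.mp hZm
    have hZA : Z ∩ A = Y ∩ A := by
      apply Set.Subset.antisymm
      · exact Set.inter_subset_inter_left A hZ.subset
      · intro a ha
        exact ⟨facts_reduct.mp hZm'.2 ha, ha.2⟩
    exact h3 Z hZ hZA hZm'.1

lemma X_ssubset_Y {A : Set ℕ} {X Y : Interp} (h : X ⊂ Y ∩ A) : X ⊂ Y := by
  have hsub : X ⊆ Y := h.subset.trans Set.inter_subset_left
  refine hsub.ssubset_of_ne ?_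
  rintro rfl
  exact absurd (Set.Subset.antisymm h.subset Set.inter_subset_left) h.ne

lemma rse_forward {A : Set ℕ} {P Q : Program}
    (h : RelStrongEquiv A P Q) {X Y : Interp}
    (hP : ASEModel A P X Y) : ASEModel A Q X Y := by
  obtain ⟨h1, h2, h3, h4⟩ := hP
  have hYYP : ASEModel A P Y Y := aseYY.mpr ⟨h2, h3⟩
  have hYYQ : ASEModel A Q Y Y := by
    rw [← factsAS]
    rw [← h (Facts (Y ∩ A)) (facts_over Set.inter_subset_right) Y]
    exact factsAS.mpr hYYP
  obtain ⟨hQ2, hQ3⟩ := aseYY.mp hYYQ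
  rcases h1 with rfl | h1
  · exact ⟨Or.inl rfl, hQ2, hQ3, fun hc => absurd rfl hc.ne⟩
  · have hXY : X ⊂ Y := X_ssubset_Y h1
    obtain ⟨X', hX'Y, hX'A, hX'P⟩ := h4 hXY
    refine ⟨Or.inr h1, hQ2, hQ3, fun _ => ?_⟩
    by_contra hno
    push_neg at hno
    set S : Set ℕ := (Y ∩ A) \ X with hS
    set R2 : Program :=
      {r | ∃ a ∈ X, r = ⟨{a}, ∅, ∅⟩} ∪
      {r | ∃ a ∈ S, ∃ b ∈ S, r = ⟨{a}, {b}, ∅⟩} with hR2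
    have hXA : X ⊆ A := h1.subset.trans Set.inter_subset_right
    have hR2over : ProgramOver A R2 := by
      rintro r (⟨a, ha, rfl⟩ | ⟨a, ha, b, hb, rfl⟩) x hx
      · simp [Rule.atoms] at hx
        subst hx
        exact hXA ha
      · simp [Rule.atoms] at hx
        rcases hx with rfl | rfl
        · exact ha.1.2
        · exact hb.1.2
    have hR2sat : ∀ Z : Interp, ModelsReduct Z R2 Y ↔
        (X ⊆ Z ∧ ∀ a ∈ S, ∀ b ∈ S, b ∈ Z → a ∈ Z) := by
      intro Z
      constructor
      · intro hm
        constructor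
        · intro a ha
          obtain ⟨c, hc, hcz⟩ := hm ⟨{a}, ∅, ∅⟩ (Or.inl ⟨a, ha, rfl⟩) (by simp) (by simp)
          simp at hc
          subst hc
          exact hcz
        · intro a ha b hb hbz
          obtain ⟨c, hc, hcz⟩ := hm ⟨{a}, {b}, ∅⟩ (Or.inr ⟨a, ha, b, hb, rfl⟩)
            (by simp) (by simpa using hbz)
          simp at hc
          subst hc
          exact hcz
      · rintro ⟨hXZ, hrules⟩ r (⟨a, ha, rfl⟩ | ⟨a, ha, b, hb, rfl⟩) hneg hpos
        · exact ⟨a, by simp, hXZ ha⟩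
        · have hbz : b ∈ Z := hpos (by simp)
          exact ⟨a, by simp, hrules a ha b hb hbz⟩
    have hnotP : ¬ AnswerSet (P ∪ R2) Y := by
      rintro ⟨_, hmin⟩
      apply hmin X'
      · refine hX'Y.ssubset_of_ne ?_
        rintro rfl
        exact h1.ne hX'A.symm
      · refine modelsReduct_union.mpr ⟨hX'P, (hR2sat X').mpr ⟨?_, ?_⟩⟩
        · intro a ha
          rw [← hX'A] at ha
          exact ha.1
        · intro a _ b hb hbz
          exfalso
          apply hb.2
          rw [← hX'A]
          exact ⟨hbz, hb.1.2⟩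
    have hQAS : AnswerSet (Q ∪ R2) Y := by
      constructor
      · refine modelsReduct_union.mpr ⟨models_iff_reduct.mp hQ2, (hR2sat Y).mpr ⟨?_, ?_⟩⟩
        · exact hXY.subset
        · intro a ha _ _ _
          exact ha.1.1
      · intro Z hZ hZm
        obtain ⟨hZQ, hZR⟩ := modelsReduct_union.mp hZm
        obtain ⟨hXZ, hrules⟩ := (hR2sat Z).mp hZR
        by_cases hZA : Z ∩ A = Y ∩ A
        · exact hQ3 Z hZ hZA hZQ
        · have hZAX : Z ∩ A = X := by
            apply Set.Subset.antisymm
            · intro b hb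
              by_contra hbX
              have hbS : b ∈ S := ⟨⟨hZ.subset hb.1, hb.2⟩, hbX⟩
              apply hZA
              apply Set.Subset.antisymm (Set.inter_subset_inter_left A hZ.subset)
              intro c hc
              refine ⟨?_, hc.2⟩
              by_cases hcX : c ∈ X
              · exact hXZ hcX
              · exact hrules c ⟨hc, hcX⟩ b hbS hb.1
            · intro a ha
              exact ⟨hXZ ha, hXA ha⟩
          exact absurd hZQ (hno Z hZ.subset hZAX)
    exact hnotP ((h R2 hR2over Y).mpr hQAS)

lemma rse_backward {A : Set ℕ} {P Q : Program}
    (h : ∀ X Y : Interp, ASEModel A P X Y ↔ ASEModel A Q X Y)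
    (R : Program) (hR : ProgramOver A R) (Y : Interp)
    (hAS : AnswerSet (P ∪ R) Y) : AnswerSet (Q ∪ R) Y := by
  obtain ⟨hm, hmin⟩ := hAS
  obtain ⟨hmP, hmR⟩ := modelsReduct_union.mp hm
  have hYYP : ASEModel A P Y Y := by
    refine aseYY.mpr ⟨models_iff_reduct.mpr hmP, ?_⟩
    intro Y' hY' hYA hY'P
    exact hmin Y' hY' (modelsReduct_union.mpr ⟨hY'P, reduct_invariant hR hYA.symm hmR⟩)
  obtain ⟨hQ2, hQ3⟩ := aseYY.mp ((h Y Y).mp hYYP)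
  constructor
  · exact modelsReduct_union.mpr ⟨models_iff_reduct.mp hQ2, hmR⟩
  · intro Z hZ hZm
    obtain ⟨hZQ, hZR⟩ := modelsReduct_union.mp hZm
    by_cases hZA : Z ∩ A = Y ∩ A
    · exact hQ3 Z hZ hZA hZQ
    · have hXss : Z ∩ A ⊂ Y ∩ A :=
        (Set.inter_subset_inter_left A hZ.subset).ssubset_of_ne hZA
      have hQX : ASEModel A Q (Z ∩ A) Y :=
        ⟨Or.inr hXss, hQ2, hQ3, fun _ => ⟨Z, hZ.subset, rfl, hZQ⟩⟩
      obtain ⟨_, _, _, h4⟩ := (h _ Y).mpr hQX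
      obtain ⟨X', hX'Y, hX'A, hX'P⟩ := h4 (X_ssubset_Y hXss)
      apply hmin X'
      · refine hX'Y.ssubset_of_ne ?_
        rintro rfl
        exact hZA hX'A.symm
      · exact modelsReduct_union.mpr ⟨hX'P, reduct_invariant hR hX'A.symm hZR⟩

theorem stmt11 (P Q : Program) (A : Set ℕ) :
    RelStrongEquiv A P Q ↔ ∀ X Y : Interp, ASEModel A P X Y ↔ ASEModel A Q X Y := by
  constructor
  · intro h X Y
    have hsym : RelStrongEquiv A Q P := fun R hR Y => (h R hR Y).symm
    exact ⟨rse_forward h, rse_forward hsym⟩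
  · intro h R hR Y
    exact ⟨rse_backward h R hR Y, rse_backward (fun X Y => (h X Y).symm) R hR Y⟩
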